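/- Let A be an n×n complex matrix, let U be a unitary n×n complex matrix and R an upper triangular n×n complex matrix such that A·U = U·R (a Schur factorization of A), with diagonal entries λᵢ = Rᵢᵢ. Fix j with 1 ≤ j ≤ n, let Q_j be the n×j matrix consisting of the first j columns of U, and let Σ_j = diag(σ₁, …, σ_j) be any j×j diagonal matrix. Then the characteristic polynomial of A_j := A − Q_j·Σ_j·Q_j* equals ∏_{i=1}^{j} (X − (λᵢ − σᵢ)) · ∏_{i=j+1}^{n} (X − λᵢ); in particular the eigenvalues of A_j are λᵢ − σᵢ for i ≤ j and λᵢ for i > j. -/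
import Mathlib


open Polynomial

lemma charpoly_conj_aux {n : ℕ} (M P Pi : Matrix (Fin n) (Fin n) ℂ)
    (h1 : P * Pi = 1) (h2 : Pi * P = 1) :
    (P * M * Pi).charpoly = M.charpoly := by
  have hmapone : (1 : Matrix (Fin n) (Fin n) ℂ).map (C : ℂ → ℂ[X]) = 1 :=
    Matrix.map_one _ (map_zero C) (map_one C)
  have hsc : (P.map C) * (Matrix.scalar (Fin n) X) * (Pi.map C)
      = Matrix.scalar (Fin n) X := by
    rw [((Matrix.scalar_commute X (fun r' => Commute.all _ _) (P.map C)).symm).eq,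
      Matrix.mul_assoc, ← Matrix.map_mul, h1, hmapone, Matrix.mul_one]
  have key : (P * M * Pi).charmatrix = (P.map C) * M.charmatrix * (Pi.map C) := by
    simp only [Matrix.charmatrix, RingHom.mapMatrix_apply, Matrix.mul_sub, Matrix.sub_mul,
      hsc, ← Matrix.map_mul]
  have hdet : (P.map (C : ℂ → ℂ[X])).det * (Pi.map C).det = 1 := by
    rw [← Matrix.det_mul, ← Matrix.map_mul, h1, hmapone, Matrix.det_one]
  rw [Matrix.charpoly, key, Matrix.det_mul, Matrix.det_mul, mul_right_comm, hdet, one_mul,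
    Matrix.charpoly]

/-- **Deflation with several Schur vectors (spectral statement).**
Let `A * U = U * R` be a Schur factorization of the `n × n` complex matrix `A`
(`U` unitary, `R` upper triangular, diagonal entries `λᵢ = Rᵢᵢ`), let `Q`
consist of the first `j` columns of `U` (with `1 ≤ j ≤ n`) and let
`Σⱼ = diagonal s` be any `j × j` diagonal matrix. Then the characteristic
polynomial of `Aⱼ = A - Q Σⱼ Q*` is
`∏_{i < j} (X - (λᵢ - σᵢ)) * ∏_{i ≥ j} (X - λᵢ)`; i.e. the eigenvalues of `Aⱼ`
are `λᵢ - σᵢ` for `i < j` and `λᵢ` for `i ≥ j`. -/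
theorem stmt_3 {n j : ℕ} (hj1 : 1 ≤ j) (hj : j ≤ n)
    (A U R : Matrix (Fin n) (Fin n) ℂ)
    (hU₁ : U.conjTranspose * U = 1) (hU₂ : U * U.conjTranspose = 1)
    (hR : ∀ i k : Fin n, k < i → R i k = 0)
    (hAUR : A * U = U * R) (s : Fin j → ℂ)
    (Q : Matrix (Fin n) (Fin j) ℂ) (hQ : Q = Matrix.of fun i k => U i (Fin.castLE hj k)) :
    (A - Q * Matrix.diagonal s * Q.conjTranspose).charpoly =
      ∏ i : Fin n,
        (X - C (if h : (i : ℕ) < j then R i i - s ⟨(i : ℕ), h⟩ else R i i)) := by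
  set d : Fin n → ℂ := fun i => if h : (i : ℕ) < j then s ⟨(i : ℕ), h⟩ else 0 with hd
  have hA : A = U * R * U.conjTranspose := by
    calc A = A * (U * U.conjTranspose) := by rw [hU₂, Matrix.mul_one]
    _ = (A * U) * U.conjTranspose := by rw [Matrix.mul_assoc]
    _ = U * R * U.conjTranspose := by rw [hAUR]
  have hQD : Q * Matrix.diagonal s * Q.conjTranspose
      = U * Matrix.diagonal d * U.conjTranspose := by
    ext i l
    rw [Matrix.mul_apply, Matrix.mul_apply]
    simp only [Matrix.mul_diagonal, Matrix.conjTranspose_apply]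
    rw [show (∑ x : Fin n, U i x * d x * star (U l x)) =
        ∑ x ∈ Finset.univ.image (Fin.castLE hj), U i x * d x * star (U l x) by
      symm
      apply Finset.sum_subset (Finset.subset_univ _)
      intro m _ hm
      have hmj : ¬ (m : ℕ) < j := by
        intro hlt
        exact hm (Finset.mem_image.mpr ⟨⟨m, hlt⟩, Finset.mem_univ _, rfl⟩)
      simp [hd, hmj]]
    rw [Finset.sum_image (fun a _ b _ h => Fin.castLE_injective hj h)]
    apply Finset.sum_congr rfl
    intro k _
    have hdk : d (Fin.castLE hj k) = s k := by
      simp [hd]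
    rw [hdk, hQ]
    rfl
  have hfinal : A - Q * Matrix.diagonal s * Q.conjTranspose
      = U * (R - Matrix.diagonal d) * U.conjTranspose := by
    rw [hA, hQD, Matrix.mul_sub, Matrix.sub_mul]
  rw [hfinal, charpoly_conj_aux _ _ _ hU₂ hU₁]
  rw [Matrix.charpoly_of_upperTriangular _ ?_]
  · apply Finset.prod_congr rfl
    intro i _
    congr 2
    simp only [Matrix.sub_apply, Matrix.diagonal_apply_eq, hd]
    split
    · rfl
    · rw [sub_zero]
  · intro i k hki
    have hik : i ≠ k := Fin.ne_of_gt hki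
    simp only [Matrix.sub_apply, hR i k hki, Matrix.diagonal_apply_ne d hik, sub_zero]
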